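/- If f : {0,1}^n → ℝ is submodular and f(0) > 0, then f is nonzero on at least 2^{n-1} points of {0,1}^n. -/

import Mathlib

/-- `f` has monotone non-increasing discrete derivatives. -/
def SubmodularMarginals {n : ℕ} (f : Finset (Fin n) → ℝ) : Prop :=
  ∀ (i : Fin n) (S T : Finset (Fin n)), S ⊆ T → i ∉ T →
    f (insert i T) - f T ≤ f (insert i S) - f S

open Finset in
private lemma submod_aux (n : ℕ) (u : Finset (Fin n)) :
    ∀ (f : Finset (Fin n) → ℝ), SubmodularMarginals f → 0 < f ∅ →
      2 ^ (u.card - 1) ≤ (u.powerset.filter (fun S => f S ≠ 0)).card := by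
  classical
  induction u using Finset.induction_on with
  | empty =>
      intro f hf h0
      have hmem : (∅ : Finset (Fin n)) ∈
          (∅ : Finset (Fin n)).powerset.filter (fun S => f S ≠ 0) := by
        simp [h0.ne']
      simpa using Finset.card_pos.mpr ⟨∅, hmem⟩
  | @insert i s hi ih =>
      intro f hf h0
      rw [Finset.card_insert_of_notMem hi]
      simp only [Nat.add_sub_cancel]
      by_cases hsing : 0 < f {i}
      · -- both slices positive at bottom; recurse
        have hg : SubmodularMarginals (fun S => f (insert i S)) := by
          intro j S T hST hjT
          by_cases hji : j = i
          · subst hji; simp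
          · simp only []
            rw [Finset.insert_comm i j T, Finset.insert_comm i j S]
            exact hf j (insert i S) (insert i T)
              (Finset.insert_subset_insert _ hST)
              (by simp [hji, hjT])
        have h1 := ih f hf h0
        have h2 := ih (fun S => f (insert i S)) hg (by simpa using hsing)
        set A := s.powerset.filter (fun S => f S ≠ 0) with hA
        set B := (s.powerset.filter (fun S => f (insert i S) ≠ 0)).image
          (insert i) with hB
        have hBcard : B.card = (s.powerset.filter
            (fun S => f (insert i S) ≠ 0)).card := by
          apply Finset.card_image_of_injOn
          intro S hS T hT hST
          have hiS : i ∉ S := fun h => hi (Finset.mem_powerset.mp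
            (Finset.mem_filter.mp hS).1 h)
          have hiT : i ∉ T := fun h => hi (Finset.mem_powerset.mp
            (Finset.mem_filter.mp hT).1 h)
          have := congrArg (Finset.erase · i) hST
          simpa [Finset.erase_insert, hiS, hiT] using this
        have hdisj : Disjoint A B := by
          rw [Finset.disjoint_left]
          intro S hSA hSB
          have hiS : i ∉ S := fun h => hi (Finset.mem_powerset.mp
            (Finset.mem_filter.mp hSA).1 h)
          obtain ⟨T, _, rfl⟩ := Finset.mem_image.mp hSB
          exact hiS (Finset.mem_insert_self i T)
        have hsub : A ∪ B ⊆ (insert i s).powerset.filter (fun S => f S ≠ 0) := by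
          intro S hS
          rcases Finset.mem_union.mp hS with h | h
          · rcases Finset.mem_filter.mp h with ⟨h1, h2⟩
            exact Finset.mem_filter.mpr
              ⟨Finset.mem_powerset.mpr ((Finset.mem_powerset.mp h1).trans
                (Finset.subset_insert i s)), h2⟩
          · obtain ⟨T, hT, rfl⟩ := Finset.mem_image.mp h
            rcases Finset.mem_filter.mp hT with ⟨h1, h2⟩
            exact Finset.mem_filter.mpr
              ⟨Finset.mem_powerset.mpr (Finset.insert_subset_insert _
                (Finset.mem_powerset.mp h1)), h2⟩
        calc 2 ^ s.card ≤ 2 ^ (s.card - 1) + 2 ^ (s.card - 1) := by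
              rcases Nat.eq_zero_or_pos s.card with h | h
              · simp [h]
              · have h2 : 2 ^ s.card = 2 ^ (s.card - 1) * 2 := by
                  rw [← pow_succ]; congr 1; omega
                omega
          _ ≤ A.card + B.card := by rw [hBcard]; exact Nat.add_le_add h1 h2
          _ = (A ∪ B).card := (Finset.card_union_of_disjoint hdisj).symm
          _ ≤ _ := Finset.card_le_card hsub
      · -- f {i} ≤ 0 : pairing argument
        push_neg at hsing
        have key : ∀ S ∈ s.powerset, f S ≠ 0 ∨ f (insert i S) ≠ 0 := by
          intro S hS
          by_contra h
          push_neg at h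
          obtain ⟨h1, h2⟩ := h
          have hiS : i ∉ S := fun hmem => hi (Finset.mem_powerset.mp hS hmem)
          have := hf i ∅ S (Finset.empty_subset S) hiS
          rw [h1, h2] at this
          rw [LawfulSingleton.insert_empty_eq] at this
          -- this : 0 - 0 ≤ f {i} - f ∅
          linarith
        have hinj : ∀ S ∈ s.powerset, ∀ T ∈ s.powerset,
            (if f S ≠ 0 then S else insert i S) =
            (if f T ≠ 0 then T else insert i T) → S = T := by
          intro S hS T hT h
          have hiS : i ∉ S := fun hmem => hi (Finset.mem_powerset.mp hS hmem)
          have hiT : i ∉ T := fun hmem => hi (Finset.mem_powerset.mp hT hmem)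
          split_ifs at h with h1 h2 h2
          · exact h
          · exact absurd (h ▸ Finset.mem_insert_self i T) hiS
          · exact absurd (h.symm ▸ Finset.mem_insert_self i S) hiT
          · have := congrArg (Finset.erase · i) h
            simpa [Finset.erase_insert, hiS, hiT] using this
        have hmaps : ∀ S ∈ s.powerset, (if f S ≠ 0 then S else insert i S) ∈
            (insert i s).powerset.filter (fun S => f S ≠ 0) := by
          intro S hS
          rcases key S hS with h | h
          · rw [if_pos h]
            exact Finset.mem_filter.mpr ⟨Finset.mem_powerset.mpr
              ((Finset.mem_powerset.mp hS).trans (Finset.subset_insert i s)), h⟩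
          · by_cases h1 : f S ≠ 0
            · rw [if_pos h1]
              exact Finset.mem_filter.mpr ⟨Finset.mem_powerset.mpr
                ((Finset.mem_powerset.mp hS).trans (Finset.subset_insert i s)), h1⟩
            · rw [if_neg h1]
              exact Finset.mem_filter.mpr ⟨Finset.mem_powerset.mpr
                (Finset.insert_subset_insert _ (Finset.mem_powerset.mp hS)), h⟩
        calc 2 ^ s.card = s.powerset.card := (Finset.card_powerset s).symm
          _ ≤ _ := Finset.card_le_card_of_injOn _ hmaps hinj

theorem submodular_pos_at_bottom_many_nonzero (n : ℕ)
    (f : Finset (Fin n) → ℝ) (hf : SubmodularMarginals f) (h0 : 0 < f ∅) :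
    2 ^ (n - 1) ≤
      (Finset.univ.filter (fun S : Finset (Fin n) => f S ≠ 0)).card := by
  have := submod_aux n Finset.univ f hf h0
  simpa [Finset.powerset_univ, Finset.card_univ] using this
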